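/- Let G be a connected graph on n ≥ 2 vertices with degrees k_1,...,k_n and normalized adjacency eigenvalues 1 = λ_1 > λ_2 ≥ ... ≥ λ_n ≥ -1. Then K(G) ≤ min over edges {i,j} of √(k_i k_j)/(√(k_i k_j)+1) + (n-2)/(1-λ_2). -/

import Mathlib

open Matrix Finset

/-- Corollary 5.6: for a connected graph `G` on `n ≥ 2` vertices with degrees `kᵢ` and
normalized adjacency eigenvalues `1 = λ₁ > λ₂ ≥ ... ≥ λₙ ≥ -1`,
`K(G) ≤ min_{i∼j} √(kᵢkⱼ)/(√(kᵢkⱼ)+1) + (n-2)/(1-λ₂)`; that is, the bound holds for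
every edge `{i,j}`. Here `K(G) = ∑_{i=2}^n 1/(1-λᵢ)`. -/
theorem kemeny_edge_upper_bound {n : ℕ} [NeZero n] (hn : 1 < n)
    (A : Matrix (Fin n) (Fin n) ℝ) (hsym : A.IsSymm)
    (h01 : ∀ i j, A i j = 0 ∨ A i j = 1) (hdiag : ∀ i, A i i = 0)
    (k : Fin n → ℝ) (hk : ∀ i, k i = ∑ j, A i j) (hkpos : ∀ i, 0 < k i)
    (N : Matrix (Fin n) (Fin n) ℝ)
    (hNdef : N = Matrix.of fun i j => A i j / (Real.sqrt (k i) * Real.sqrt (k j)))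
    (hN : N.IsHermitian)
    (lam : Fin n → ℝ) (hlam : lam = hN.eigenvalues)
    (hsort : ∀ i j : Fin n, i ≤ j → lam j ≤ lam i)
    (hlam0 : lam 0 = 1) (hlamlt : ∀ i : Fin n, i ≠ 0 → lam i < 1)
    (hlamge : ∀ i : Fin n, -1 ≤ lam i) :
    ∀ i j : Fin n, A i j = 1 →
      ∑ l ∈ Finset.univ.erase (0 : Fin n), (1 - lam l)⁻¹
        ≤ Real.sqrt (k i * k j) / (Real.sqrt (k i * k j) + 1)
            + ((n : ℝ) - 2)/(1 - lam ⟨1, hn⟩) := by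
  intro i j hij
  have hne : i ≠ j := by
    intro h; rw [h, hdiag] at hij; norm_num at hij
  set s : ℝ := Real.sqrt (k i * k j) with hs
  have hspos : 0 < s := Real.sqrt_pos.mpr (mul_pos (hkpos i) (hkpos j))
  have hn1 : n - 1 < n := by omega
  set m : Fin n := ⟨n - 1, hn1⟩ with hm
  have hm0 : m ≠ 0 := by
    simp only [hm, Fin.ext_iff, Fin.val_zero, ne_eq]
    omega
  have hone : (⟨1, hn⟩ : Fin n) ≠ 0 := by
    simp [Fin.ext_iff]
  have hlam2 : lam ⟨1, hn⟩ < 1 := hlamlt _ hone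
  -- key eigenvalue bound : lam m ≤ -1/s
  have hmin : ∀ l : Fin n, lam m ≤ lam l := fun l =>
    hsort l m (Fin.le_def.mpr (by have := l.isLt; simp [hm]; omega))
  set c : ℝ := lam m with hc
  have key : c ≤ -1 / s := by
    set V : Matrix (Fin n) (Fin n) ℝ := (hN.eigenvectorUnitary : Matrix (Fin n) (Fin n) ℝ)
      with hV
    have hVV : V * star V = 1 := Matrix.mem_unitaryGroup_iff.mp hN.eigenvectorUnitary.2
    have hdecomp : N - c • (1 : Matrix (Fin n) (Fin n) ℝ)
        = V * Matrix.diagonal (fun l => lam l - c) * (star V) := by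
      have h1 : N = V * Matrix.diagonal lam * (star V) := by
        rw [hlam]
        have := hN.spectral_theorem
        rw [RCLike.ofReal_real_eq_id] at this
        simpa using this
      have h2 : c • (1 : Matrix (Fin n) (Fin n) ℝ) = V * (c • 1) * (star V) := by
        rw [Matrix.mul_smul, Matrix.smul_mul, Matrix.mul_one, hVV]
      rw [h1, h2, ← Matrix.sub_mul, ← Matrix.mul_sub, Matrix.smul_one_eq_diagonal,
        Matrix.diagonal_sub]
    have hnn : ∀ l : Fin n, 0 ≤ lam l - c := fun l => sub_nonneg.mpr (hmin l)
    have hPSD : (V * Matrix.diagonal (fun l => lam l - c) * (star V)).PosSemidef := by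
      rw [Matrix.star_eq_conjTranspose]
      exact (Matrix.posSemidef_diagonal_iff.mpr hnn).mul_mul_conjTranspose_same V
    rw [← hdecomp] at hPSD
    set x : Fin n → ℝ := Pi.single i 1 - Pi.single j 1 with hx
    have hq := hPSD.dotProduct_mulVec_nonneg x
    have hAji : A j i = 1 := by
      have := congrFun (congrFun hsym.eq i) j
      simpa [Matrix.transpose_apply, hij] using this
    have hN_ij : N i j = 1 / s := by
      rw [hNdef]
      simp [hij, hs, Real.sqrt_mul (hkpos i).le]
    have hN_ji : N j i = 1 / s := by
      rw [hNdef]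
      simp [hAji, hs, Real.sqrt_mul (hkpos i).le]
      ring
    have hN_ii : N i i = 0 := by rw [hNdef]; simp [hdiag i]
    have hN_jj : N j j = 0 := by rw [hNdef]; simp [hdiag j]
    have hcomp : star x ⬝ᵥ ((N - c • (1 : Matrix (Fin n) (Fin n) ℝ)) *ᵥ x)
        = -2 * c - 2 / s := by
      have hstar : star x = x := by simp [hx]
      rw [hstar, hx]
      rw [Matrix.mulVec_sub]
      simp only [Matrix.mulVec_single, mul_one, sub_dotProduct, single_dotProduct, one_mul,
        MulOpposite.op_one, one_smul, Matrix.col_apply]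
      have h1 : (1 : Matrix (Fin n) (Fin n) ℝ) i j = 0 := Matrix.one_apply_ne hne
      have h2 : (1 : Matrix (Fin n) (Fin n) ℝ) j i = 0 := Matrix.one_apply_ne hne.symm
      simp only [Pi.sub_apply, Matrix.col_apply]
      rw [Matrix.sub_apply, Matrix.sub_apply, Matrix.sub_apply, Matrix.sub_apply,
        Matrix.smul_apply, Matrix.smul_apply, Matrix.smul_apply, Matrix.smul_apply,
        Matrix.one_apply_eq, Matrix.one_apply_eq, h1, h2, hN_ij, hN_ji, hN_ii, hN_jj]
      simp only [smul_eq_mul]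
      ring
    rw [hcomp] at hq
    have h2s : (2:ℝ) / s = 2 * (1 / s) := by ring
    rw [neg_div]
    linarith
  -- deduce (1 - c)⁻¹ ≤ s / (s + 1)
  have hterm : (1 - c)⁻¹ ≤ s / (s + 1) := by
    have h1 : (s + 1) / s ≤ 1 - c := by
      have : 1 / s ≤ -c := by
        rw [neg_div] at key; linarith
      have : (s + 1) / s = 1 + 1 / s := by field_simp
      linarith
    have h2 : (0:ℝ) < (s + 1) / s := div_pos (by linarith) hspos
    calc (1 - c)⁻¹ ≤ ((s + 1) / s)⁻¹ := by
          exact inv_anti₀ h2 h1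
      _ = s / (s + 1) := by rw [inv_div]
  -- split the sum
  have hmem : m ∈ Finset.univ.erase (0 : Fin n) :=
    Finset.mem_erase.mpr ⟨hm0, Finset.mem_univ m⟩
  rw [← Finset.add_sum_erase _ _ hmem]
  have hrest : ∑ l ∈ (Finset.univ.erase (0 : Fin n)).erase m, (1 - lam l)⁻¹
      ≤ ((n : ℝ) - 2) * (1 - lam ⟨1, hn⟩)⁻¹ := by
    have hb : ∀ l ∈ (Finset.univ.erase (0 : Fin n)).erase m,
        (1 - lam l)⁻¹ ≤ (1 - lam ⟨1, hn⟩)⁻¹ := by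
      intro l hl
      have hl0 : l ≠ 0 := (Finset.mem_erase.mp (Finset.mem_erase.mp hl).2).1
      have hpos : 1 ≤ l.val := Nat.pos_of_ne_zero (fun h => hl0 (by simp [Fin.ext_iff, h]))
      have hle : (⟨1, hn⟩ : Fin n) ≤ l := by
        simpa [Fin.le_def] using hpos
      have := hsort _ _ hle
      have hpos1 : 0 < 1 - lam l := by linarith [hlamlt l hl0]
      have hpos2 : 0 < 1 - lam ⟨1, hn⟩ := by linarith
      exact inv_anti₀ (by linarith) (by linarith)
    calc ∑ l ∈ (Finset.univ.erase (0 : Fin n)).erase m, (1 - lam l)⁻¹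
        ≤ ((Finset.univ.erase (0 : Fin n)).erase m).card • (1 - lam ⟨1, hn⟩)⁻¹ :=
          Finset.sum_le_card_nsmul _ _ _ hb
      _ = ((n : ℝ) - 2) * (1 - lam ⟨1, hn⟩)⁻¹ := by
          rw [Finset.card_erase_of_mem hmem, Finset.card_erase_of_mem (Finset.mem_univ _),
            Finset.card_univ, Fintype.card_fin, nsmul_eq_mul]
          congr 1
          have : (2:ℕ) ≤ n := hn
          push_cast [Nat.sub_sub]
          rw [Nat.cast_sub this]
          push_cast
          ring
    done
  have : ((n : ℝ) - 2) / (1 - lam ⟨1, hn⟩) = ((n : ℝ) - 2) * (1 - lam ⟨1, hn⟩)⁻¹ :=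
    div_eq_mul_inv _ _
  rw [this]
  exact add_le_add hterm hrest
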